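/- Fix a rejection cost d ∈ (0, 1/2), a bandwidth ρ ≥ 0 and a margin t ∈ ℝ with t ≠ −ρ. Then the double ramp loss converges pointwise to the 0–d–1 loss as the slope parameter tends to zero: the limit of L_DR^μ(t, ρ) as μ → 0⁺ equals L_{0-d-1}(t, ρ). -/

import Mathlib

/-- The 0-d-1 loss on margin `t` with bandwidth `ρ` and rejection cost `d`. -/
noncomputable def L0d1 (d ρ t : ℝ) : ℝ :=
  if t < -ρ then 1 else if t ≤ ρ then d else 0

/-- The double ramp loss on margin `t` with rejection cost `d`, slope `μ`, bandwidth `ρ`. -/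
noncomputable def LDR (d μ ρ t : ℝ) : ℝ :=
  d / μ * (max 0 (μ - t + ρ) - max 0 (-μ^2 - t + ρ))
    + (1 - d) / μ * (max 0 (μ - t - ρ) - max 0 (-μ^2 - t - ρ))

lemma aux_ramp (a : ℝ) :
    Filter.Tendsto (fun μ : ℝ => (max 0 (μ - a) - max 0 (-μ^2 - a)) / μ)
      (nhdsWithin 0 (Set.Ioi 0)) (nhds (if a ≤ 0 then 1 else 0)) := by
  rcases lt_trichotomy a 0 with ha | ha | ha
  · rw [if_pos ha.le]
    have h1 : Filter.Tendsto (fun μ : ℝ => 1 + μ) (nhdsWithin 0 (Set.Ioi 0)) (nhds 1) := by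
      have h : Filter.Tendsto (fun μ : ℝ => 1 + μ) (nhds (0:ℝ)) (nhds 1) := by
        have := ((continuous_const (y := (1:ℝ))).add continuous_id).tendsto (0 : ℝ)
        simpa [Pi.add_def] using this
      exact h.mono_left nhdsWithin_le_nhds
    refine h1.congr' ?_
    filter_upwards [Ioo_mem_nhdsGT_of_mem
      (Set.left_mem_Ico.2 (lt_min one_pos (by linarith : (0:ℝ) < -a)))] with μ hμ
    obtain ⟨hμ0, hμlt⟩ := hμ
    have hμ1 : μ < 1 := lt_of_lt_of_le hμlt (min_le_left _ _)
    have hμa : μ < -a := lt_of_lt_of_le hμlt (min_le_right _ _)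
    have hsq : μ^2 < -a := by nlinarith
    rw [max_eq_right (by nlinarith : (0:ℝ) ≤ μ - a),
        max_eq_right (by nlinarith : (0:ℝ) ≤ -μ^2 - a)]
    field_simp
    ring
  · subst ha
    rw [if_pos le_rfl]
    refine tendsto_const_nhds.congr' ?_
    filter_upwards [self_mem_nhdsWithin] with μ (hμ : 0 < μ)
    rw [max_eq_right (by nlinarith : (0:ℝ) ≤ μ - 0),
        max_eq_left (by nlinarith : -μ^2 - 0 ≤ 0)]
    field_simp
    ring
  · rw [if_neg (not_le.2 ha)]
    refine tendsto_const_nhds.congr' ?_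
    filter_upwards [Ioo_mem_nhdsGT_of_mem
      (Set.left_mem_Ico.2 (by positivity : (0:ℝ) < a))] with μ hμ
    obtain ⟨hμ0, hμa⟩ := hμ
    rw [max_eq_left (by nlinarith : μ - a ≤ 0),
        max_eq_left (by nlinarith : -μ^2 - a ≤ 0)]
    simp

theorem stmt_1 (d ρ t : ℝ) (hd : d ∈ Set.Ioo (0 : ℝ) (1/2)) (hρ : 0 ≤ ρ)
    (ht : t ≠ -ρ) :
    Filter.Tendsto (fun μ : ℝ => LDR d μ ρ t)
      (nhdsWithin 0 (Set.Ioi 0)) (nhds (L0d1 d ρ t)) := by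
  have h1 := (aux_ramp (t - ρ)).const_mul d
  have h2 := (aux_ramp (t + ρ)).const_mul (1 - d)
  have hsum := h1.add h2
  have heq : (fun μ : ℝ => LDR d μ ρ t) =
      fun μ : ℝ => d * ((max 0 (μ - (t - ρ)) - max 0 (-μ^2 - (t - ρ))) / μ)
        + (1 - d) * ((max 0 (μ - (t + ρ)) - max 0 (-μ^2 - (t + ρ))) / μ) := by
    funext μ
    unfold LDR
    have e1 : μ - (t - ρ) = μ - t + ρ := by ring
    have e2 : -μ^2 - (t - ρ) = -μ^2 - t + ρ := by ring
    have e3 : μ - (t + ρ) = μ - t - ρ := by ring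
    have e4 : -μ^2 - (t + ρ) = -μ^2 - t - ρ := by ring
    rw [e1, e2, e3, e4]
    ring
  rw [heq]
  have hval : L0d1 d ρ t =
      d * (if t - ρ ≤ 0 then (1:ℝ) else 0) + (1 - d) * (if t + ρ ≤ 0 then (1:ℝ) else 0) := by
    unfold L0d1
    split_ifs <;> (try push_neg at *) <;>
      rcases lt_or_gt_of_ne ht with h | h <;> first | ring1 | linarith
  rw [hval]
  exact hsum
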